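/- Let 𝒯 be a pretriangulated category and F : 𝒯 ⥤ 𝒯 an additive functor equipped with a commutation isomorphism F ∘ [1] ≅ [1] ∘ F with the shift functor, such that F sends distinguished triangles to distinguished triangles. Equip the category F-𝒯 of F-objects with the shift (E, Φ)[1] := (E[1], Φ'), where Φ' is the composite of Φ[1] : E[1] → (F E)[1] with the commutation isomorphism (F E)[1] ≅ F(E[1]), and declare a triangle in F-𝒯 to be distinguished if its image under the forgetful functor is a distinguished triangle of 𝒯. Then F-𝒯 satisfies the axioms TR1 and TR2 of triangulated categories: (TR1) every triangle isomorphic to a distinguished triangle is distinguished, for every F-object X the triangle X →^{id} X → 0 → X[1] is distinguished, and every morphism u : X → Y of F-objects can be completed to a distinguished triangle X → Y → Z → X[1] in F-𝒯; (TR2) a triangle in F-𝒯 is distinguished if and only if its rotated triangle (with the usual sign convention) is distinguished. -/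

import Mathlib

/-!
Statement 1: let 𝒯 be a pretriangulated category and F : 𝒯 ⥤ 𝒯 an additive functor
commuting with the shift and sending distinguished triangles to distinguished triangles.
Equip the category F-𝒯 of F-objects with the induced shift and declare a triangle of
F-objects distinguished if its underlying triangle is distinguished. Then F-𝒯 satisfies
TR1 (closure under isomorphism, contractible triangles, completion of morphisms) and
TR2 (rotation).
-/

open CategoryTheory CategoryTheory.Limits CategoryTheory.Pretriangulated ZeroObject

universe v u

/-- An `F`-object of `C`: an object `E` together with an isomorphism `Φ : E ≅ F E`. -/
structure FObj (C : Type u) [Category.{v} C] (F : C ⥤ C) : Type max u v where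
  obj : C
  iso : obj ≅ F.obj obj

/-- A morphism of `F`-objects. -/
@[ext]
structure FHom {C : Type u} [Category.{v} C] {F : C ⥤ C} (X Y : FObj C F) : Type v where
  hom : X.obj ⟶ Y.obj
  comm : hom ≫ Y.iso.hom = X.iso.hom ≫ F.map hom

/-- The category of `F`-objects. -/
instance FObj.category {C : Type u} [Category.{v} C] (F : C ⥤ C) :
    Category (FObj C F) where
  Hom X Y := FHom X Y
  id X := ⟨𝟙 X.obj, by simp⟩
  comp f g := ⟨f.hom ≫ g.hom, by
    rw [Category.assoc, g.comm, ← Category.assoc, f.comm, Category.assoc, F.map_comp]⟩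
  id_comp f := by apply FHom.ext; simp
  comp_id f := by apply FHom.ext; simp
  assoc f g h := by apply FHom.ext; simp

section Aux
variable {C : Type u} [Category.{v} C] {F : C ⥤ C}

@[simp] lemma FHom.comp_hom {X Y Z : FObj C F} (f : X ⟶ Y) (g : Y ⟶ Z) :
    (f ≫ g).hom = f.hom ≫ g.hom := rfl

@[simp] lemma FHom.id_hom (X : FObj C F) : (𝟙 X : X ⟶ X).hom = 𝟙 X.obj := rfl

lemma FHom.isIso_hom {X Y : FObj C F} (f : X ⟶ Y) [IsIso f] : IsIso f.hom :=
  ⟨(inv f).hom, by rw [← FHom.comp_hom, IsIso.hom_inv_id]; rfl,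
    by rw [← FHom.comp_hom, IsIso.inv_hom_id]; rfl⟩

end Aux

section Triangulated

variable {C : Type u} [Category.{v} C] [HasZeroObject C] [Preadditive C] [HasShift C ℤ]
  [∀ n : ℤ, (shiftFunctor C n).Additive] [Pretriangulated C]
  (F : C ⥤ C) [F.Additive] [F.CommShift ℤ] [F.IsTriangulated]

/-- The shift of an `F`-object: `(E, Φ)[1] = (E[1], Φ')` where `Φ'` is `Φ[1]` composed
with the commutation isomorphism `(F E)[1] ≅ F (E[1])`. -/
noncomputable def shiftF (X : FObj C F) : FObj C F where
  obj := X.obj⟦(1 : ℤ)⟧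
  iso := (shiftFunctor C (1 : ℤ)).mapIso X.iso ≪≫ ((F.commShiftIso (1 : ℤ)).app X.obj).symm

/-- The shift of a morphism of `F`-objects. -/
noncomputable def shiftFMap {X Y : FObj C F} (f : X ⟶ Y) : shiftF F X ⟶ shiftF F Y where
  hom := f.hom⟦(1 : ℤ)⟧'
  comm := by
    dsimp [shiftF]
    rw [← Functor.map_comp_assoc, f.comm, Functor.map_comp_assoc]
    have h := (F.commShiftIso (1 : ℤ)).inv.naturality f.hom
    dsimp at h
    rw [h, Category.assoc]

/-- The negative of a morphism of `F`-objects. -/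
def FHom.neg {X Y : FObj C F} (f : X ⟶ Y) : X ⟶ Y where
  hom := -f.hom
  comm := by simp [f.comm]

/-- A triangle of `F`-objects. -/
structure FTriangle where
  X : FObj C F
  Y : FObj C F
  Z : FObj C F
  f : X ⟶ Y
  g : Y ⟶ Z
  h : Z ⟶ shiftF F X

/-- The underlying triangle in `C` of a triangle of `F`-objects. -/
noncomputable def FTriangle.toTriangle (T : FTriangle F) : Triangle C :=
  Triangle.mk T.f.hom T.g.hom T.h.hom

/-- A triangle of `F`-objects is distinguished if its underlying triangle is. -/
def FTriangle.IsDist (T : FTriangle F) : Prop := T.toTriangle ∈ distTriang C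

/-- The zero `F`-object. -/
noncomputable def zeroF : FObj C F :=
  ⟨0, (isZero_zero C).iso (F.map_isZero (isZero_zero C))⟩

/-- The contractible triangle `X ⟶ X ⟶ 0 ⟶ X⟦1⟧` of `F`-objects. -/
noncomputable def contractibleFTriangle (X : FObj C F) : FTriangle F where
  X := X
  Y := X
  Z := zeroF F
  f := 𝟙 X
  g := ⟨0, by simp⟩
  h := ⟨0, by simp⟩

/-- The rotation of a triangle of `F`-objects, with the usual sign convention. -/
noncomputable def FTriangle.rotate (T : FTriangle F) : FTriangle F where
  X := T.Y
  Y := T.Z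
  Z := shiftF F T.X
  f := T.g
  g := T.h
  h := FHom.neg F (shiftFMap F T.f)

theorem stmt_1 :
    -- (TR1 a) a triangle of F-objects isomorphic to a distinguished one is distinguished
    (∀ (T T' : FTriangle F) (e₁ : T.X ⟶ T'.X) (e₂ : T.Y ⟶ T'.Y) (e₃ : T.Z ⟶ T'.Z),
      IsIso e₁ → IsIso e₂ → IsIso e₃ →
      T.f ≫ e₂ = e₁ ≫ T'.f →
      T.g ≫ e₃ = e₂ ≫ T'.g →
      T.h ≫ shiftFMap F e₁ = e₃ ≫ T'.h →
      T.IsDist → T'.IsDist) ∧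
    -- (TR1 b) the triangle X ⟶ X ⟶ 0 ⟶ X⟦1⟧ is distinguished
    (∀ X : FObj C F, (contractibleFTriangle F X).IsDist) ∧
    -- (TR1 c) any morphism of F-objects extends to a distinguished triangle
    (∀ (X Y : FObj C F) (u : X ⟶ Y),
      ∃ (Z : FObj C F) (g : Y ⟶ Z) (h : Z ⟶ shiftF F X),
        (FTriangle.mk X Y Z u g h).IsDist) ∧
    -- (TR2) a triangle is distinguished iff its rotation is distinguished
    (∀ T : FTriangle F, T.IsDist ↔ FTriangle.IsDist F (FTriangle.rotate F T)) := by
  refine ⟨?_, ?_, ?_, ?_⟩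
  · -- TR1a
    intro T T' e₁ e₂ e₃ h₁ h₂ h₃ c₁ c₂ c₃ hT
    have i₁ := FHom.isIso_hom e₁
    have i₂ := FHom.isIso_hom e₂
    have i₃ := FHom.isIso_hom e₃
    show FTriangle.toTriangle F T' ∈ distTriang C
    refine isomorphic_distinguished _ hT _ (Iso.symm ?_)
    refine Triangle.isoMk _ _ (@asIso _ _ _ _ e₁.hom i₁) (@asIso _ _ _ _ e₂.hom i₂)
      (@asIso _ _ _ _ e₃.hom i₃) ?_ ?_ ?_
    · exact congrArg FHom.hom c₁
    · exact congrArg FHom.hom c₂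
    · exact congrArg FHom.hom c₃
  · -- TR1b
    intro X
    exact contractible_distinguished X.obj
  · -- TR1c
    intro X Y u
    obtain ⟨Z₀, g₀, h₀, hT⟩ := distinguished_cocone_triangle u.hom
    set T₀ : Triangle C := Triangle.mk u.hom g₀ h₀ with hT₀
    have hFT : F.mapTriangle.obj T₀ ∈ distTriang C := F.map_distinguished T₀ hT
    obtain ⟨c, hc₁, hc₂⟩ := complete_distinguished_triangle_morphism T₀
      (F.mapTriangle.obj T₀) hT hFT X.iso.hom Y.iso.hom u.comm
    have hiso : IsIso c := by
      have := isIso₃_of_isIso₁₂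
        ({ hom₁ := X.iso.hom, hom₂ := Y.iso.hom, hom₃ := c,
           comm₁ := u.comm, comm₂ := hc₁, comm₃ := hc₂ } :
          T₀ ⟶ F.mapTriangle.obj T₀) hT hFT
        (Iso.isIso_hom X.iso) (Iso.isIso_hom Y.iso)
      exact this
    refine ⟨⟨Z₀, @asIso _ _ _ _ c hiso⟩, ⟨g₀, ?_⟩, ⟨h₀, ?_⟩, ?_⟩
    · exact hc₁
    · dsimp [shiftF]
      have hc₂' : h₀ ≫ (shiftFunctor C (1 : ℤ)).map X.iso.hom =
          c ≫ (F.map h₀ ≫ (F.commShiftIso (1 : ℤ)).hom.app X.obj) := hc₂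
      rw [← Category.assoc, hc₂']
      change (c ≫ F.map h₀ ≫ (F.commShiftIso (1 : ℤ)).hom.app X.obj) ≫
        (F.commShiftIso (1 : ℤ)).inv.app X.obj = c ≫ F.map h₀
      simp only [Category.assoc, Iso.hom_inv_id_app, Category.comp_id]
      exact congrArg (fun k => c ≫ k) ((Category.assoc _ _ _).trans
        ((congrArg (fun k => F.map h₀ ≫ k) (Iso.hom_inv_id_app (F.commShiftIso (1 : ℤ)) X.obj)).trans (Category.comp_id _)))
    · exact hT
  · -- TR2
    intro T
    have : FTriangle.toTriangle F (FTriangle.rotate F T) = (FTriangle.toTriangle F T).rotate := by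
      dsimp [FTriangle.toTriangle, FTriangle.rotate, FHom.neg, shiftFMap, Triangle.rotate]
      rfl
    rw [FTriangle.IsDist, FTriangle.IsDist, this]
    exact rotate_distinguished_triangle (FTriangle.toTriangle F T)

end Triangulated
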